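/- Any subset classifier has exactly two elements: if (Ω, t) is a set with t ∈ Ω such that every injection into any set is the inverse image of t under a unique characteristic function, then Ω is in bijection with Bool. -/
import Mathlib


theorem subset_classifier_two_elements (Ω : Type u) (t : Ω)
    (h : ∀ (A X : Type u) (j : A → X), Function.Injective j →
      ∃! χ : X → Ω,
        (∀ a, χ (j a) = t) ∧
        (∀ (I : Type u) (q : I → X), (∀ s, χ (q s) = t) →
          ∃! qbar : I → A, q = j ∘ qbar)) :
    Nonempty (Ω ≃ Bool) := by
  classical
  obtain ⟨χ₀, hχ₀, huniq⟩ :=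
    h PEmpty PUnit (fun a => a.elim) (fun a => a.elim)
  set f := χ₀ PUnit.unit with hfdef
  have hft : f ≠ t := by
    intro hf
    obtain ⟨qbar, -, -⟩ := hχ₀.2 PUnit id (fun s => by cases s; exact hf)
    exact (qbar PUnit.unit).elim
  have key : ∀ ω : Ω, ω ≠ t → ω = f := by
    intro ω hω
    have heq : (fun _ : PUnit => ω) = χ₀ := by
      apply huniq
      refine ⟨fun a => a.elim, ?_⟩
      intro I q hq
      exact ⟨fun s => (hω (hq s)).elim, funext fun s => (hω (hq s)).elim,
        fun y _ => funext fun s => (hω (hq s)).elim⟩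
    calc ω = (fun _ : PUnit => ω) PUnit.unit := rfl
      _ = f := by rw [heq]
  exact ⟨{
    toFun := fun ω => if ω = t then true else false
    invFun := fun b => if b then t else f
    left_inv := by
      intro ω
      by_cases hω : ω = t <;> simp [hω]
      exact (key ω hω).symm
    right_inv := by
      intro b
      cases b <;> simp [hft]
  }⟩
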